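/- The canonical basis of the Banach space $(\oplus_{n=1}^\infty \ell_2^n)_{\ell_p}$, for $1<p<\infty$, $p\ne2$, is an unconditional basis which is not democratic. -/

import Mathlib

open scoped ENNReal

noncomputable section

/-- The Banach space `(⊕ₙ ℓ₂ⁿ)_{ℓ_p}`. -/
abbrev SumSpace (p : ℝ) : Type :=
  lp (fun n : ℕ => EuclideanSpace ℝ (Fin (n + 1))) (ENNReal.ofReal p)

/-- The canonical basis of `(⊕ₙ ℓ₂ⁿ)_{ℓ_p}`, indexed by pairs `(n, i)` with
`i < n + 1`: the union of the canonical bases of the summands. -/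
def canBasis (p : ℝ) (v : Σ n : ℕ, Fin (n + 1)) : SumSpace p :=
  lp.single (ENNReal.ofReal p) v.1 (EuclideanSpace.single v.2 1)

section Aux

variable {p : ℝ}

lemma canBasis_apply (v : Σ n : ℕ, Fin (n + 1)) (n : ℕ) (j : Fin (n + 1)) :
    (canBasis p v : ∀ n, EuclideanSpace ℝ (Fin (n + 1))) n j
      = if (⟨n, j⟩ : Σ n : ℕ, Fin (n + 1)) = v then 1 else 0 := by
  obtain ⟨m, i⟩ := v
  by_cases h : n = m
  · subst h
    rw [show (canBasis p ⟨n, i⟩ : ∀ n, EuclideanSpace ℝ (Fin (n + 1))) n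
        = EuclideanSpace.single i 1 from lp.single_apply_self _ _ _]
    simp [EuclideanSpace.single_apply]
  · rw [show (canBasis p ⟨m, i⟩ : ∀ n, EuclideanSpace ℝ (Fin (n + 1))) n = 0 from
      lp.single_apply_ne _ _ _ h]
    simp [h]

lemma canBasis_sum_apply [Fact ((1 : ℝ≥0∞) ≤ ENNReal.ofReal p)]
    (A : Finset (Σ n : ℕ, Fin (n + 1))) (a : (Σ n : ℕ, Fin (n + 1)) → ℝ)
    (n : ℕ) (j : Fin (n + 1)) :
    ((∑ v ∈ A, a v • canBasis p v : SumSpace p) : ∀ n, EuclideanSpace ℝ (Fin (n + 1))) n j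
      = if (⟨n, j⟩ : Σ n : ℕ, Fin (n + 1)) ∈ A then a ⟨n, j⟩ else 0 := by
  rw [lp.coeFn_sum]
  have : ∀ v ∈ A, ((a v • canBasis p v : SumSpace p) :
      ∀ n, EuclideanSpace ℝ (Fin (n + 1))) n j
      = if v = (⟨n, j⟩ : Σ n : ℕ, Fin (n + 1)) then a v else 0 := by
    intro v hv
    rw [lp.coeFn_smul]
    show a v * ((canBasis p v : ∀ n, EuclideanSpace ℝ (Fin (n + 1))) n j) = _
    rw [canBasis_apply]
    rcases eq_or_ne v (⟨n, j⟩ : Σ n : ℕ, Fin (n + 1)) with h | h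
    · simp [h]
    · simp [h, Ne.symm h]
  rw [Finset.sum_apply, WithLp.ofLp_sum, Finset.sum_apply, Finset.sum_congr rfl this, Finset.sum_ite_eq' A _ a]

end Aux

section Norms

variable {p : ℝ} [Fact ((1 : ℝ≥0∞) ≤ ENNReal.ofReal p)]

lemma toReal_p (hp0 : 0 < p) : (ENNReal.ofReal p).toReal = p :=
  ENNReal.toReal_ofReal hp0.le

lemma single_sum {n : ℕ} {ι : Type*} (s : Finset ι) (g : ι → EuclideanSpace ℝ (Fin (n + 1))) :
    (∑ i ∈ s, lp.single (ENNReal.ofReal p) n (g i) : SumSpace p)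
      = lp.single (ENNReal.ofReal p) n (∑ i ∈ s, g i) := by
  refine lp.ext (funext fun m => ?_)
  by_cases h : m = n
  · subst h
    rw [lp.single_apply_self, lp.coeFn_sum, Finset.sum_apply]
    exact Finset.sum_congr rfl fun i _ => lp.single_apply_self _ _ _
  · rw [lp.single_apply_ne _ _ _ h, lp.coeFn_sum, Finset.sum_apply]
    exact Finset.sum_eq_zero fun i _ => lp.single_apply_ne _ _ _ h

lemma norm_lp_single (hp0 : 0 < p) {n : ℕ} (x : EuclideanSpace ℝ (Fin (n + 1))) :
    ‖(lp.single (ENNReal.ofReal p) n x : SumSpace p)‖ = ‖x‖ := by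
  have hpt : 0 < (ENNReal.ofReal p).toReal := by rw [toReal_p hp0]; exact hp0
  set f : ∀ m : ℕ, EuclideanSpace ℝ (Fin (m + 1)) :=
    fun m => if h : m = n then cast (by rw [h]) x else 0 with hf
  have hfn : f n = x := by simp [hf]
  have := lp.norm_single (E := fun m : ℕ => EuclideanSpace ℝ (Fin (m + 1))) (ENNReal.ofReal_pos.mpr hp0) n (f n)
  rwa [hfn] at this

lemma norm_block (hp0 : 0 < p) (N : ℕ) :
    ‖∑ i : Fin (N + 1), canBasis p ⟨N, i⟩‖ = Real.sqrt (N + 1) := by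
  have : (∑ i : Fin (N + 1), canBasis p ⟨N, i⟩)
      = lp.single (ENNReal.ofReal p) N (∑ i : Fin (N + 1), EuclideanSpace.single i (1 : ℝ)) :=
    single_sum Finset.univ _
  rw [this, norm_lp_single hp0, EuclideanSpace.norm_eq]
  congr 1
  have : ∀ j : Fin (N + 1),
      ‖(∑ i : Fin (N + 1), EuclideanSpace.single i (1 : ℝ)) j‖ ^ 2 = 1 := by
    intro j
    have : (∑ i : Fin (N + 1), EuclideanSpace.single i (1 : ℝ)) j
        = ∑ i : Fin (N + 1), (if j = i then (1 : ℝ) else 0) := by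
      rw [WithLp.ofLp_sum, Finset.sum_apply]
      exact Finset.sum_congr rfl fun i _ => EuclideanSpace.single_apply i 1 j
    rw [this]
    simp
  rw [Finset.sum_congr rfl fun j _ => this j]
  simp

lemma norm_line (hp0 : 0 < p) (N : ℕ) :
    ‖∑ n ∈ Finset.range N, canBasis p ⟨n, 0⟩‖ = (N : ℝ) ^ (1 / p) := by
  have hpt : 0 < (ENNReal.ofReal p).toReal := by rw [toReal_p hp0]; exact hp0
  have key := lp.norm_sum_single (E := fun m : ℕ => EuclideanSpace ℝ (Fin (m + 1))) hpt
    (fun m => EuclideanSpace.single (0 : Fin (m + 1)) (1 : ℝ)) (Finset.range N)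
  simp only [EuclideanSpace.norm_single, norm_one, Real.one_rpow, Finset.sum_const,
    Finset.card_range, nsmul_eq_mul, mul_one] at key
  have hnorm : ‖∑ n ∈ Finset.range N, canBasis p ⟨n, 0⟩‖
      = ‖∑ n ∈ Finset.range N, lp.single (ENNReal.ofReal p) n
        (EuclideanSpace.single (0 : Fin (n + 1)) (1 : ℝ))‖ := rfl
  rw [toReal_p hp0] at key
  rw [hnorm, ← key, ← Real.rpow_mul (norm_nonneg _), mul_one_div, div_self hp0.ne',
    Real.rpow_one]

end Norms

lemma rpow_contra {r Δ s t : ℝ} (hr : 0 < r) (h1 : r ^ t ≤ Δ * r ^ s)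
    (h2 : Δ < r ^ (t - s)) : False := by
  rw [Real.rpow_sub hr] at h2
  rw [lt_div_iff₀ (Real.rpow_pos_of_pos hr s)] at h2
  exact absurd h1 (not_le.mpr h2)

lemma exists_big (α Δ : ℝ) (hα : 0 < α) : ∃ N : ℕ, Δ < ((N : ℝ) + 1) ^ α := by
  have h := (tendsto_rpow_atTop hα).eventually_ge_atTop (Δ + 1)
  rw [Filter.eventually_atTop] at h
  obtain ⟨x₀, hx₀⟩ := h
  obtain ⟨N, hN⟩ := exists_nat_ge x₀
  refine ⟨N, ?_⟩
  have : Δ + 1 ≤ ((N : ℝ) + 1) ^ α := hx₀ _ (by linarith)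
  linarith


/-- for `1 < p < ∞`, `p ≠ 2`, the canonical basis of
`(⊕ₙ ℓ₂ⁿ)_{ℓ_p}` is unconditional but not democratic. -/
theorem stmt14 (p : ℝ) (hp1 : 1 < p) (hp2 : p ≠ 2)
    [Fact ((1 : ℝ≥0∞) ≤ ENNReal.ofReal p)] :
    (∃ C : ℝ, ∀ (A : Finset (Σ n : ℕ, Fin (n + 1))) (a ε : (Σ n : ℕ, Fin (n + 1)) → ℝ),
      (∀ v ∈ A, |ε v| = 1) →
      ‖∑ v ∈ A, (ε v * a v) • canBasis p v‖ ≤ C * ‖∑ v ∈ A, a v • canBasis p v‖) ∧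
    ¬ ∃ Δ : ℝ, 1 ≤ Δ ∧ ∀ A A' : Finset (Σ n : ℕ, Fin (n + 1)), A.card ≤ A'.card →
      ‖∑ v ∈ A, canBasis p v‖ ≤ Δ * ‖∑ v ∈ A', canBasis p v‖ := by
  have hp0 : 0 < p := by linarith
  have hpt : 0 < (ENNReal.ofReal p).toReal := by rw [toReal_p hp0]; exact hp0
  constructor
  · refine ⟨1, fun A a ε hε => ?_⟩
    rw [one_mul]
    apply le_of_eq
    rw [lp.norm_eq_tsum_rpow hpt, lp.norm_eq_tsum_rpow hpt]
    congr 1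
    refine tsum_congr fun n => ?_
    congr 1
    rw [EuclideanSpace.norm_eq, EuclideanSpace.norm_eq]
    congr 1
    refine Finset.sum_congr rfl fun j _ => ?_
    rw [canBasis_sum_apply, canBasis_sum_apply]
    by_cases h : (⟨n, j⟩ : Σ n : ℕ, Fin (n + 1)) ∈ A
    · rw [if_pos h, if_pos h, Real.norm_eq_abs, Real.norm_eq_abs, abs_mul, hε _ h, one_mul]
    · rw [if_neg h, if_neg h]
  · rintro ⟨Δ, hΔ1, hΔ⟩
    -- the two families of sets
    set bl : ℕ → Finset (Σ n : ℕ, Fin (n + 1)) :=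
      fun N => Finset.image (fun i : Fin (N + 1) => (⟨N, i⟩ : Σ n : ℕ, Fin (n + 1)))
        Finset.univ with hbl
    set ln : ℕ → Finset (Σ n : ℕ, Fin (n + 1)) :=
      fun N => Finset.image (fun n : ℕ => (⟨n, (0 : Fin (n + 1))⟩ : Σ n : ℕ, Fin (n + 1)))
        (Finset.range (N + 1)) with hln
    have hinjb : ∀ N : ℕ, Function.Injective
        (fun i : Fin (N + 1) => (⟨N, i⟩ : Σ n : ℕ, Fin (n + 1))) :=
      fun N a b h => by injection h with h1 h2
    have hinjl : Function.Injective
        (fun n : ℕ => (⟨n, (0 : Fin (n + 1))⟩ : Σ n : ℕ, Fin (n + 1))) :=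
      fun a b h => congrArg Sigma.fst h
    have hcard : ∀ N : ℕ, (bl N).card = (ln N).card := by
      intro N
      rw [hbl, hln, Finset.card_image_of_injective _ (hinjb N),
        Finset.card_image_of_injective _ hinjl]
      simp
    have hnb : ∀ N : ℕ, ‖∑ v ∈ bl N, canBasis p v‖ = ((N : ℝ) + 1) ^ ((2 : ℝ)⁻¹) := by
      intro N
      rw [hbl, Finset.sum_image (fun a _ b _ h => hinjb N h), norm_block hp0 N,
        Real.sqrt_eq_rpow]
      norm_num
    have hnl : ∀ N : ℕ, ‖∑ v ∈ ln N, canBasis p v‖ = ((N : ℝ) + 1) ^ (p⁻¹) := by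
      intro N
      rw [hln, Finset.sum_image (fun a _ b _ h => hinjl h), norm_line hp0 (N + 1)]
      push_cast
      rw [one_div]
    rcases lt_or_gt_of_ne hp2 with hlt | hgt
    · -- p < 2 : line norm dominates block norm
      have hα : 0 < p⁻¹ - (2 : ℝ)⁻¹ := by
        rw [sub_pos]
        exact inv_strictAnti₀ hp0 hlt
      obtain ⟨N, hN⟩ := exists_big _ Δ hα
      have h1 := hΔ (ln N) (bl N) (le_of_eq (hcard N).symm)
      rw [hnl, hnb] at h1
      exact rpow_contra (by positivity) h1 hN
    · have hα : 0 < (2 : ℝ)⁻¹ - p⁻¹ := by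
        rw [sub_pos]
        exact inv_strictAnti₀ two_pos hgt
      obtain ⟨N, hN⟩ := exists_big _ Δ hα
      have h1 := hΔ (bl N) (ln N) (le_of_eq (hcard N))
      rw [hnl, hnb] at h1
      exact rpow_contra (by positivity) h1 hN
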